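/- The 2-strand configuration graph of the tripod Y (the star with one center and three leaves) is isomorphic to the cycle graph on 6 vertices. -/

import Mathlib

/-- The tripod `Y`: the star with center `none` and three leaves `some i`. -/
def tripod : SimpleGraph (Option (Fin 3)) where
  Adj x y := x.isNone ≠ y.isNone
  symm := ⟨fun _ _ h => h.symm⟩
  loopless := ⟨fun _ h => h rfl⟩

/-- The 2-strand configuration graph of a graph `G`: vertices are the 2-element
subsets of the vertex set, and `S` is adjacent to `T` iff `|S ∩ T| = 1` and the
unique vertex of `S \ T` is adjacent in `G` to the unique vertex of `T \ S`. -/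
def conf2 {V : Type*} [DecidableEq V] (G : SimpleGraph V) :
    SimpleGraph {S : Finset V // S.card = 2} where
  Adj S T := (S.1 ∩ T.1).card = 1 ∧
    ∃ u v, u ∈ S.1 \ T.1 ∧ v ∈ T.1 \ S.1 ∧ G.Adj u v
  symm := by
    constructor
    rintro S T ⟨hc, u, v, hu, hv, ha⟩
    exact ⟨by rwa [Finset.inter_comm], v, u, hv, hu, ha.symm⟩
  loopless := by
    constructor
    rintro S ⟨hc, u, v, hu, _⟩
    simp at hu

instance : DecidableRel tripod.Adj := fun x y => by
  exact (inferInstance : Decidable (x.isNone ≠ y.isNone))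

instance : DecidableRel (conf2 tripod).Adj := fun S T => by
  unfold conf2; exact instDecidableAnd

abbrev C : Type := {S : Finset (Option (Fin 3)) // S.card = 2}

def f : Fin 6 → C
  | 0 => ⟨{none, some 0}, by decide⟩
  | 1 => ⟨{some 0, some 1}, by decide⟩
  | 2 => ⟨{none, some 1}, by decide⟩
  | 3 => ⟨{some 1, some 2}, by decide⟩
  | 4 => ⟨{none, some 2}, by decide⟩
  | 5 => ⟨{some 2, some 0}, by decide⟩

/-- The 2-strand configuration graph of the tripod is a hexagon. -/
theorem conf2_tripod_iso_cycle6 : Nonempty (conf2 tripod ≃g SimpleGraph.cycleGraph 6) := by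
  have hinj : Function.Injective f := by decide
  have hbij : Function.Bijective f :=
    (Fintype.bijective_iff_injective_and_card f).2 ⟨hinj, by decide⟩
  let e := Equiv.ofBijective f hbij
  refine ⟨⟨e.symm, ?_⟩⟩
  intro a b
  have : ∀ i j : Fin 6, (conf2 tripod).Adj (f i) (f j) ↔ (SimpleGraph.cycleGraph 6).Adj i j := by
    decide
  have ha := e.apply_symm_apply a
  have hb := e.apply_symm_apply b
  rw [← this (e.symm a) (e.symm b), show f (e.symm a) = a from ha, show f (e.symm b) = b from hb]
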